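/- Let G = (V,E) be the directed spanner instance built from a projection games instance in which every vertex of L has degree exactly K ≥ 1, with parameter k ≥ 2. If S ⊆ E is a (2k−1)-spanner of G, then there exists a (2k−1)-spanner S' of G with S' ∩ E_Outer = ∅ and |S'| ≤ 3·|S|. -/

import Mathlib

open Finset

/-- A directed path in the graph with edge set `E`, from `u` to `v`, given as its (nonempty)
list of edges: consecutive edges are incident, the first edge starts at `u`, the last edge ends
at `v`, and no vertex is visited twice. -/
def IsDirPath {V : Type*} [DecidableEq V] (E : Finset (V × V)) (u v : V)
    (p : List (V × V)) : Prop :=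
  p ≠ [] ∧ (∀ e ∈ p, e ∈ E) ∧ Option.map Prod.fst p.head? = some u ∧
    Option.map Prod.snd p.getLast? = some v ∧
    List.Chain' (fun e f => e.2 = f.1) p ∧ (u :: p.map Prod.snd).Nodup

/-- `z ∈ Z^{u,v}` (with respect to stretch `t`): a fractional cut against the stretch-`t`
paths from `u` to `v`, i.e. `z : E → [0,1]` with `∑_{e ∈ P} z e ≥ 1` for every path
`P ∈ 𝒫_{u,v}` (at most `t` edges). -/
def InZ {V : Type*} [DecidableEq V] (E : Finset (V × V)) (t : ℕ) (u v : V)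
    (z : V × V → ℝ) : Prop :=
  (∀ e ∈ E, 0 ≤ z e ∧ z e ≤ 1) ∧
  ∀ p : List (V × V), IsDirPath E u v p → p.length ≤ t → 1 ≤ (p.map z).sum

/-- A `t`-spanner of the directed graph with edge set `E`: a subset `S ⊆ E` such that every
edge `(u,v) ∈ E` is spanned by a directed path from `u` to `v` of at most `t` edges,
all belonging to `S`. -/
def IsSpanner {V : Type*} [DecidableEq V] (E S : Finset (V × V)) (t : ℕ) : Prop :=
  S ⊆ E ∧ ∀ e ∈ E, ∃ p : List (V × V), IsDirPath S e.1 e.2 p ∧ p.length ≤ t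

/-- The moment matrix `(y_{I ∪ J})`, indexed by the subsets `I, J ⊆ E` with `|I|, |J| ≤ r`. -/
def momentMatrixE {α : Type*} [Fintype α] [DecidableEq α] (E : Finset α) (r : ℕ)
    (y : Finset α → ℝ) :
    Matrix {S : Finset α // S ⊆ E ∧ S.card ≤ r} {S : Finset α // S ⊆ E ∧ S.card ≤ r} ℝ :=
  Matrix.of fun I J => y (I.1 ∪ J.1)

/-- The slack moment matrix `(∑_{e ∈ E} z e · y_{I∪J∪{e}} − y_{I∪J})`, indexed by the subsets
`I, J ⊆ E` with `|I|, |J| ≤ r`. -/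
def slackMatrixE {α : Type*} [Fintype α] [DecidableEq α] (E : Finset α) (r : ℕ)
    (y : Finset α → ℝ) (z : α → ℝ) :
    Matrix {S : Finset α // S ⊆ E ∧ S.card ≤ r} {S : Finset α // S ⊆ E ∧ S.card ≤ r} ℝ :=
  Matrix.of fun I J => (∑ e ∈ E, z e * y (insert e (I.1 ∪ J.1))) - y (I.1 ∪ J.1)

/-- The ambient vertex type for the directed `(2k−1)`-spanner instance built from a projection
games instance with left vertices `L`, right vertices `R` and alphabet `Sg`; `D` is the number
of duplicate vertices (`D = k·K·|Σ|`) and `T` the number of internal vertices of each middle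
path (`T = 2k−4`).  The five summands are: the label vertices `c_{i,σ}`, the duplicate vertices
`c_i^l`, the label vertices `x_{j,σ}`, the duplicate vertices `x_j^l`, and the middle-path
vertices `w_{i,j,σL,σR,t}`. -/
abbrev SpV (L R Sg : Type) (D T : ℕ) : Type :=
  (L × Sg) ⊕ (L × Fin D) ⊕ (R × Sg) ⊕ (R × Fin D) ⊕ (L × R × Sg × Sg × Fin T)

namespace SpV

variable {L R Sg : Type} {D T : ℕ}

/-- The label vertex `c_{i,σ}`. -/
def cLab (i : L) (σ : Sg) : SpV L R Sg D T := Sum.inl (i, σ)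

/-- The duplicate vertex `c_i^l`. -/
def cDup (i : L) (l : Fin D) : SpV L R Sg D T := Sum.inr (Sum.inl (i, l))

/-- The label vertex `x_{j,σ}`. -/
def xLab (j : R) (σ : Sg) : SpV L R Sg D T := Sum.inr (Sum.inr (Sum.inl (j, σ)))

/-- The duplicate vertex `x_j^l`. -/
def xDup (j : R) (l : Fin D) : SpV L R Sg D T :=
  Sum.inr (Sum.inr (Sum.inr (Sum.inl (j, l))))

/-- The middle-path vertex `w_{i,j,σL,σR,t}`. -/
def mid (i : L) (j : R) (σL σR : Sg) (t : Fin T) : SpV L R Sg D T :=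
  Sum.inr (Sum.inr (Sum.inr (Sum.inr (i, j, σL, σR, t))))

end SpV

set_option synthInstance.maxSize 1000 in
instance SpV.instDecidableEq {L R Sg : Type} [DecidableEq L] [DecidableEq R] [DecidableEq Sg]
    {D T : ℕ} : DecidableEq (SpV L R Sg D T) := inferInstance

instance SpV.instFintype {L R Sg : Type} [Fintype L] [Fintype R] [Fintype Sg] {D T : ℕ} :
    Fintype (SpV L R Sg D T) := inferInstance

namespace Spanner

/-- The number `k·K·|Σ|` of duplicate vertices per projection-games vertex. -/
abbrev numDup (Sg : Type) [Fintype Sg] (k K : ℕ) : ℕ := k * K * Fintype.card Sg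

/-- The vertex type of the directed spanner instance with parameters `k, K`. -/
abbrev Vt (L R Sg : Type) [Fintype Sg] (k K : ℕ) : Type :=
  SpV L R Sg (numDup Sg k K) (2 * k - 4)

/-- The edge set `E_L = {(c_i^l, c_{i,σ})}`. -/
def ELedges (L R Sg : Type) [Fintype L] [Fintype R] [Fintype Sg]
    [DecidableEq L] [DecidableEq R] [DecidableEq Sg] (k K : ℕ) :
    Finset (Vt L R Sg k K × Vt L R Sg k K) :=
  Finset.univ.image fun p : L × Fin (numDup Sg k K) × Sg =>
    (SpV.cDup p.1 p.2.1, SpV.cLab p.1 p.2.2)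

/-- The edge set `E_R = {(x_{j,σ}, x_j^l)}`. -/
def ERedges (L R Sg : Type) [Fintype L] [Fintype R] [Fintype Sg]
    [DecidableEq L] [DecidableEq R] [DecidableEq Sg] (k K : ℕ) :
    Finset (Vt L R Sg k K × Vt L R Sg k K) :=
  Finset.univ.image fun p : R × Fin (numDup Sg k K) × Sg =>
    (SpV.xLab p.1 p.2.2, SpV.xDup p.1 p.2.1)

/-- The edge set `E_LStars = {(c_{i,1}, c_{i,σ}), (c_{i,σ}, c_{i,1}) : σ ≠ 1}`
(`σ0` plays the role of the fixed label `1 ∈ Σ`). -/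
def ELStars (L R : Type) {Sg : Type} [Fintype L] [Fintype R] [Fintype Sg]
    [DecidableEq L] [DecidableEq R] [DecidableEq Sg] (σ0 : Sg) (k K : ℕ) :
    Finset (Vt L R Sg k K × Vt L R Sg k K) :=
  ((Finset.univ.filter fun p : L × Sg => p.2 ≠ σ0).image fun p =>
      (SpV.cLab p.1 σ0, SpV.cLab p.1 p.2)) ∪
  ((Finset.univ.filter fun p : L × Sg => p.2 ≠ σ0).image fun p =>
      (SpV.cLab p.1 p.2, SpV.cLab p.1 σ0))

/-- The edge set `E_RStars = {(x_{j,1}, x_{j,σ}), (x_{j,σ}, x_{j,1}) : σ ≠ 1}`. -/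
def ERStars (L R : Type) {Sg : Type} [Fintype L] [Fintype R] [Fintype Sg]
    [DecidableEq L] [DecidableEq R] [DecidableEq Sg] (σ0 : Sg) (k K : ℕ) :
    Finset (Vt L R Sg k K × Vt L R Sg k K) :=
  ((Finset.univ.filter fun p : R × Sg => p.2 ≠ σ0).image fun p =>
      (SpV.xLab p.1 σ0, SpV.xLab p.1 p.2)) ∪
  ((Finset.univ.filter fun p : R × Sg => p.2 ≠ σ0).image fun p =>
      (SpV.xLab p.1 p.2, SpV.xLab p.1 σ0))

/-- The edge set `E_Outer = {(c_i^l, x_j^l) : {c_i, x_j} ∈ E_Proj, l ∈ [kK|Σ|]}`. -/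
def EOuter {L R : Type} (Sg : Type) [Fintype L] [Fintype R] [Fintype Sg]
    [DecidableEq L] [DecidableEq R] [DecidableEq Sg]
    (Eproj : Finset (L × R)) (k K : ℕ) :
    Finset (Vt L R Sg k K × Vt L R Sg k K) :=
  (Eproj ×ˢ (Finset.univ : Finset (Fin (numDup Sg k K)))).image fun p =>
    (SpV.cDup p.1.1 p.2, SpV.xDup p.1.2 p.2)

/-- The vertex sequence `c_{i,σL}, w_{i,j,σL,σR,1}, …, w_{i,j,σL,σR,2k−4}, x_{j,σR}` of the
middle path (for `k = 2` it is just `c_{i,σL}, x_{j,σR}`). -/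
def midVerts {L R Sg : Type} [Fintype Sg] (k K : ℕ) (i : L) (j : R) (σL σR : Sg) :
    List (Vt L R Sg k K) :=
  (SpV.cLab i σL :: (List.finRange (2 * k - 4)).map fun t => SpV.mid i j σL σR t) ++
    [SpV.xLab j σR]

/-- The list of consecutive edges of a vertex sequence. -/
def pathEdges {V : Type*} (vs : List V) : List (V × V) := vs.zip vs.tail

/-- The edge list `E_M^{i,j,σL,σR}` of the middle path from `c_{i,σL}` to `x_{j,σR}`. -/
def EMpath {L R Sg : Type} [Fintype Sg] (k K : ℕ) (i : L) (j : R) (σL σR : Sg) :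
    List (Vt L R Sg k K × Vt L R Sg k K) :=
  pathEdges (midVerts k K i j σL σR)

/-- The edge set `E_M = ⋃_{ {c_i,x_j} ∈ E_Proj, (σL,σR) ∈ π_{i,j} } E_M^{i,j,σL,σR}`. -/
def EMedges {L R Sg : Type} [Fintype L] [Fintype R] [Fintype Sg]
    [DecidableEq L] [DecidableEq R] [DecidableEq Sg]
    (Eproj : Finset (L × R)) (π : L → R → Sg → Sg) (k K : ℕ) :
    Finset (Vt L R Sg k K × Vt L R Sg k K) :=
  Eproj.biUnion fun e => (Finset.univ : Finset Sg).biUnion fun σL =>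
    (EMpath k K e.1 e.2 σL (π e.1 e.2 σL)).toFinset

/-- The edge set `E = E_L ∪ E_LStars ∪ E_M ∪ E_RStars ∪ E_R ∪ E_Outer` of the directed
spanner instance. -/
def Edges {L R Sg : Type} [Fintype L] [Fintype R] [Fintype Sg]
    [DecidableEq L] [DecidableEq R] [DecidableEq Sg]
    (Eproj : Finset (L × R)) (π : L → R → Sg → Sg) (σ0 : Sg) (k K : ℕ) :
    Finset (Vt L R Sg k K × Vt L R Sg k K) :=
  ELedges L R Sg k K ∪ ELStars L R σ0 k K ∪ EMedges Eproj π k K ∪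
    ERStars L R σ0 k K ∪ ERedges L R Sg k K ∪ EOuter Sg Eproj k K

/-- The vertex set `V = L_Labels ∪ L_Dups ∪ R_Labels ∪ R_Dups ∪ M_Paths` of the directed
spanner instance. -/
def Verts {L R Sg : Type} [Fintype L] [Fintype R] [Fintype Sg]
    [DecidableEq L] [DecidableEq R] [DecidableEq Sg]
    (Eproj : Finset (L × R)) (π : L → R → Sg → Sg) (k K : ℕ) :
    Finset (Vt L R Sg k K) :=
  (Finset.univ.image fun p : L × Sg => SpV.cLab p.1 p.2) ∪
  (Finset.univ.image fun p : L × Fin (numDup Sg k K) => SpV.cDup p.1 p.2) ∪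
  (Finset.univ.image fun p : R × Sg => SpV.xLab p.1 p.2) ∪
  (Finset.univ.image fun p : R × Fin (numDup Sg k K) => SpV.xDup p.1 p.2) ∪
  (Eproj.biUnion fun e => (Finset.univ : Finset Sg).biUnion fun σL =>
    Finset.univ.image fun t : Fin (2 * k - 4) =>
      SpV.mid e.1 e.2 σL (π e.1 e.2 σL) t)

/-- The map `Φ` sending an edge of `E ∖ E_Outer` to the corresponding label set:
`Φ((c_i^l, c_{i,σ})) = {(c_i, σ)}`, `Φ((x_{j,σ}, x_j^l)) = {(x_j, σ)}`, and `Φ(e) = ∅` for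
`e ∈ E_LStars ∪ E_M ∪ E_RStars`. -/
def Phi {L R Sg : Type} [Fintype Sg] {k K : ℕ}
    (e : Vt L R Sg k K × Vt L R Sg k K) : Finset ((L ⊕ R) × Sg) :=
  match e with
  | (Sum.inr (Sum.inl _), Sum.inl (i, σ)) => {(Sum.inl i, σ)}
  | (Sum.inr (Sum.inr (Sum.inl (j, σ))), Sum.inr (Sum.inr (Sum.inr (Sum.inl _)))) =>
      {(Sum.inr j, σ)}
  | _ => ∅

/-- The fractional solution `y'` built from a solution `y*` of the projection games SDP:
`y'_S = 0` if `S` contains an edge of `E_Outer`, and `y'_S = y*_{Φ(S)}` otherwise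
(where `Φ(S) = ⋃_{e ∈ S} Φ(e)`). -/
def yPrime {L R Sg : Type} [Fintype L] [Fintype R] [Fintype Sg]
    [DecidableEq L] [DecidableEq R] [DecidableEq Sg]
    (Eproj : Finset (L × R)) (k K : ℕ) (ystar : Finset ((L ⊕ R) × Sg) → ℝ)
    (S : Finset (Vt L R Sg k K × Vt L R Sg k K)) : ℝ :=
  if (S ∩ EOuter Sg Eproj k K).Nonempty then 0 else ystar (S.biUnion Phi)

end Spanner


section PathAux

variable {V : Type*} [DecidableEq V]

open Spanner

lemma pathEdges_cons₂ (a b : V) (l : List V) :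
    pathEdges (a :: b :: l) = (a, b) :: pathEdges (b :: l) := rfl

lemma length_pathEdges (vs : List V) : (pathEdges vs).length = vs.length - 1 := by
  simp [pathEdges]

lemma map_snd_pathEdges (vs : List V) : (pathEdges vs).map Prod.snd = vs.tail :=
  List.map_snd_zip (by simp)

lemma mem_pathEdges {vs : List V} {e : V × V} :
    e ∈ pathEdges vs ↔ ∃ n, ∃ h : n + 1 < vs.length, e = (vs[n], vs[n + 1]) := by
  constructor
  · intro hm
    obtain ⟨n, hn, he⟩ := List.mem_iff_getElem.1 hm
    rw [length_pathEdges] at hn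
    refine ⟨n, by omega, ?_⟩
    rw [← he]
    simp [pathEdges, List.getElem_zip, List.getElem_tail]
  · rintro ⟨n, h, rfl⟩
    apply List.mem_iff_getElem.2
    refine ⟨n, by rw [length_pathEdges]; omega, ?_⟩
    simp [pathEdges, List.getElem_zip, List.getElem_tail]

lemma chain'_pathEdges (vs : List V) :
    List.Chain' (fun e f => e.2 = f.1) (pathEdges vs) := by
  refine List.isChain_iff_getElem.2 ?_
  intro i h
  rw [length_pathEdges] at h
  simp [List.get_eq_getElem, pathEdges, List.getElem_zip, List.getElem_tail]

lemma pathEdges_concat : ∀ (l : List V) (hl : l ≠ []) (b : V),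
    pathEdges (l ++ [b]) = pathEdges l ++ [(l.getLast hl, b)]
  | [a], _, b => by simp [pathEdges]
  | a :: c :: t, _, b => by
    show (a, c) :: pathEdges ((c :: t) ++ [b]) =
      ((a, c) :: pathEdges (c :: t)) ++ [((a :: c :: t).getLast (by simp), b)]
    rw [pathEdges_concat (c :: t) (by simp) b]
    simp [List.getLast_cons]

lemma isDirPath_pathEdges (S : Finset (V × V)) (vs : List V) (hne : vs ≠ [])
    (h2 : 2 ≤ vs.length) (hnd : vs.Nodup) (hmem : ∀ e ∈ pathEdges vs, e ∈ S) :
    IsDirPath S (vs.head hne) (vs.getLast hne) (pathEdges vs) := by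
  obtain ⟨a, vs', rfl⟩ : ∃ a t, vs = a :: t := ⟨vs.head hne, vs.tail, (List.cons_head_tail hne).symm⟩
  obtain ⟨b, t, rfl⟩ : ∃ b t', vs' = b :: t' := by
    cases vs' with
    | nil => simp at h2
    | cons b t => exact ⟨b, t, rfl⟩
  refine ⟨by simp [pathEdges_cons₂], hmem, ?_, ?_, chain'_pathEdges _, ?_⟩
  · rw [pathEdges_cons₂]; simp
  · have hm := map_snd_pathEdges (a :: b :: t)
    have h1 : (pathEdges (a :: b :: t)).getLast?.map Prod.snd
        = ((pathEdges (a :: b :: t)).map Prod.snd).getLast? := by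
      rw [List.getLast?_map]
    rw [h1, hm]
    simp [List.getLast?_eq_getLast (by simp : (b :: t) ≠ []), List.getLast_cons]
  · have hm := map_snd_pathEdges (a :: b :: t)
    rw [hm]
    simpa using hnd

lemma IsDirPath.first_edge {S : Finset (V × V)} {u v : V} {p : List (V × V)}
    (h : IsDirPath S u v p) : ∃ f ∈ p, f ∈ S ∧ f.1 = u := by
  obtain ⟨hne, hmem, hhead, -, -, -⟩ := h
  obtain ⟨f, t, rfl⟩ : ∃ f t, p = f :: t := by
    cases p with
    | nil => simp at hne
    | cons f t => exact ⟨f, t, rfl⟩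
  simp only [List.head?_cons, Option.map_some] at hhead
  exact ⟨f, List.mem_cons_self, hmem _ (List.mem_cons_self), by
    simpa using hhead⟩

lemma IsDirPath.last_edge {S : Finset (V × V)} {u v : V} {p : List (V × V)}
    (h : IsDirPath S u v p) : ∃ f ∈ p, f ∈ S ∧ f.2 = v := by
  obtain ⟨hne, hmem, -, hlast, -, -⟩ := h
  rw [List.getLast?_eq_getLast hne] at hlast
  refine ⟨p.getLast hne, List.getLast_mem hne, hmem _ (List.getLast_mem hne), by
    simpa using hlast⟩

end PathAux


set_option linter.unusedSectionVars false

section SpannerAux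

open Spanner SpV

variable {L R Sg : Type} [Fintype L] [Fintype R] [Fintype Sg]
  [DecidableEq L] [DecidableEq R] [DecidableEq Sg]
  {Eproj : Finset (L × R)} {π : L → R → Sg → Sg} {σ0 : Sg} {k K : ℕ}

lemma mem_ELedges' {e : Vt L R Sg k K × Vt L R Sg k K} :
    e ∈ ELedges L R Sg k K ↔ ∃ i l σ, e = (SpV.cDup i l, SpV.cLab i σ) := by
  constructor
  · intro h
    simp only [ELedges, Finset.mem_image, Finset.mem_univ, true_and] at h
    obtain ⟨⟨i, l, σ⟩, he⟩ := h
    exact ⟨i, l, σ, he.symm⟩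
  · rintro ⟨i, l, σ, rfl⟩
    exact Finset.mem_image.2 ⟨(i, l, σ), Finset.mem_univ _, rfl⟩

lemma mem_ERedges' {e : Vt L R Sg k K × Vt L R Sg k K} :
    e ∈ ERedges L R Sg k K ↔ ∃ j l σ, e = (SpV.xLab j σ, SpV.xDup j l) := by
  constructor
  · intro h
    simp only [ERedges, Finset.mem_image, Finset.mem_univ, true_and] at h
    obtain ⟨⟨j, l, σ⟩, he⟩ := h
    exact ⟨j, l, σ, he.symm⟩
  · rintro ⟨j, l, σ, rfl⟩
    exact Finset.mem_image.2 ⟨(j, l, σ), Finset.mem_univ _, rfl⟩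

lemma mem_ELStars' {e : Vt L R Sg k K × Vt L R Sg k K} :
    e ∈ ELStars L R σ0 k K →
      ∃ i σ σ', e = (SpV.cLab i σ, SpV.cLab i σ') := by
  intro h
  simp only [ELStars, Finset.mem_union, Finset.mem_image, Finset.mem_filter,
    Finset.mem_univ, true_and] at h
  rcases h with ⟨⟨i, σ⟩, -, he⟩ | ⟨⟨i, σ⟩, -, he⟩
  · exact ⟨i, σ0, σ, he.symm⟩
  · exact ⟨i, σ, σ0, he.symm⟩

lemma mem_ERStars' {e : Vt L R Sg k K × Vt L R Sg k K} :
    e ∈ ERStars L R σ0 k K →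
      ∃ j σ σ', e = (SpV.xLab j σ, SpV.xLab j σ') := by
  intro h
  simp only [ERStars, Finset.mem_union, Finset.mem_image, Finset.mem_filter,
    Finset.mem_univ, true_and] at h
  rcases h with ⟨⟨j, σ⟩, -, he⟩ | ⟨⟨j, σ⟩, -, he⟩
  · exact ⟨j, σ0, σ, he.symm⟩
  · exact ⟨j, σ, σ0, he.symm⟩

lemma mem_EOuter' {e : Vt L R Sg k K × Vt L R Sg k K} :
    e ∈ EOuter Sg Eproj k K ↔
      ∃ i j l, (i, j) ∈ Eproj ∧ e = (SpV.cDup i l, SpV.xDup j l) := by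
  constructor
  · intro h
    simp only [EOuter, Finset.mem_image, Finset.mem_product, Finset.mem_univ, and_true] at h
    obtain ⟨⟨⟨i, j⟩, l⟩, hij, he⟩ := h
    exact ⟨i, j, l, hij, he.symm⟩
  · rintro ⟨i, j, l, hij, rfl⟩
    exact Finset.mem_image.2 ⟨((i, j), l), Finset.mem_product.2 ⟨hij, Finset.mem_univ _⟩, rfl⟩

lemma mem_EMedges' {e : Vt L R Sg k K × Vt L R Sg k K} :
    e ∈ EMedges Eproj π k K ↔
      ∃ i j σL, (i, j) ∈ Eproj ∧ e ∈ EMpath k K i j σL (π i j σL) := by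
  simp only [EMedges, Finset.mem_biUnion, Finset.mem_univ, true_and, List.mem_toFinset,
    Prod.exists]
  constructor
  · rintro ⟨i, j, hij, σL, h⟩
    exact ⟨i, j, σL, hij, h⟩
  · rintro ⟨i, j, σL, hij, h⟩
    exact ⟨i, j, hij, σL, h⟩

lemma mem_Edges' {e : Vt L R Sg k K × Vt L R Sg k K} :
    e ∈ Edges Eproj π σ0 k K ↔
      e ∈ ELedges L R Sg k K ∨ e ∈ ELStars L R σ0 k K ∨ e ∈ EMedges Eproj π k K ∨
      e ∈ ERStars L R σ0 k K ∨ e ∈ ERedges L R Sg k K ∨ e ∈ EOuter Sg Eproj k K := by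
  simp only [Edges, Finset.mem_union]
  tauto

lemma midVerts_length {i : L} {j : R} {σL σR : Sg} :
    (midVerts k K i j σL σR).length = 2 * k - 4 + 2 := by
  simp [midVerts]

lemma midVerts_getElem_zero {i : L} {j : R} {σL σR : Sg}
    {h : 0 < (midVerts k K i j σL σR).length} :
    (midVerts k K i j σL σR)[0] = SpV.cLab i σL := rfl

lemma midVerts_getElem_succ {i : L} {j : R} {σL σR : Sg} (n : ℕ) (hn : n < 2 * k - 4)
    {h : n + 1 < (midVerts k K i j σL σR).length} :
    (midVerts k K i j σL σR)[n + 1] = SpV.mid i j σL σR ⟨n, hn⟩ := by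
  have h1 : n + 1 < (SpV.cLab i σL (D := numDup Sg k K) (T := 2*k-4) ::
      (List.finRange (2 * k - 4)).map fun t => SpV.mid i j σL σR t).length := by
    simp; omega
  show ((SpV.cLab i σL :: (List.finRange (2 * k - 4)).map fun t => SpV.mid i j σL σR t)
      ++ [SpV.xLab j σR])[n + 1]'h = SpV.mid i j σL σR ⟨n, hn⟩
  refine (List.getElem_append_left h1).trans ?_
  simp [List.getElem_finRange, Fin.cast]

lemma midVerts_getElem_last {i : L} {j : R} {σL σR : Sg}
    {h : 2 * k - 4 + 1 < (midVerts k K i j σL σR).length} :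
    (midVerts k K i j σL σR)[2 * k - 4 + 1] = SpV.xLab j σR := by
  have h1 : (SpV.cLab i σL (D := numDup Sg k K) (T := 2*k-4) ::
      (List.finRange (2 * k - 4)).map fun t => SpV.mid i j σL σR t).length ≤ 2 * k - 4 + 1 := by
    simp
  show ((SpV.cLab i σL :: (List.finRange (2 * k - 4)).map fun t => SpV.mid i j σL σR t)
      ++ [SpV.xLab j σR])[2 * k - 4 + 1]'h = SpV.xLab j σR
  refine (List.getElem_append_right h1).trans ?_
  simp

lemma midVerts_getElem_cases {i : L} {j : R} {σL σR : Sg} (n : ℕ)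
    (h : n < (midVerts k K i j σL σR).length) :
    (n = 0 ∧ (midVerts k K i j σL σR)[n] = SpV.cLab i σL) ∨
    (∃ hn : n - 1 < 2 * k - 4, 1 ≤ n ∧ n ≤ 2 * k - 4 ∧
      (midVerts k K i j σL σR)[n] = SpV.mid i j σL σR ⟨n - 1, hn⟩) ∨
    (n = 2 * k - 4 + 1 ∧ (midVerts k K i j σL σR)[n] = SpV.xLab j σR) := by
  have hlen : (midVerts k K i j σL σR).length = 2 * k - 4 + 2 := midVerts_length
  rcases Nat.eq_zero_or_pos n with rfl | hpos
  · exact Or.inl ⟨rfl, midVerts_getElem_zero⟩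
  by_cases hle : n ≤ 2 * k - 4
  · refine Or.inr (Or.inl ⟨by omega, hpos, hle, ?_⟩)
    obtain ⟨m, rfl⟩ : ∃ m, n = m + 1 := ⟨n - 1, by omega⟩
    simp only [Nat.add_sub_cancel]
    exact midVerts_getElem_succ m (by omega)
  · have hn : n = 2 * k - 4 + 1 := by omega
    subst hn
    exact Or.inr (Or.inr ⟨rfl, midVerts_getElem_last⟩)

lemma midVerts_nodup {i : L} {j : R} {σL σR : Sg} :
    (midVerts k K i j σL σR).Nodup := by
  have hmapnd : ((List.finRange (2 * k - 4)).map fun t =>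
      SpV.mid i j σL σR t (L := L) (R := R) (D := numDup Sg k K)).Nodup := by
    refine List.Nodup.map ?_ (List.nodup_finRange _)
    intro a b hab
    simpa [SpV.mid] using hab
  simp only [midVerts, List.nodup_append, List.nodup_cons, List.mem_map, List.nodup_nil]
  refine ⟨⟨?_, hmapnd⟩, by simp, ?_⟩
  · rintro ⟨t, -, ht⟩
    simp [SpV.mid, SpV.cLab] at ht
  · intro a ha
    simp only [List.mem_cons, List.mem_map] at ha
    rcases ha with rfl | ⟨t, -, rfl⟩
    · simp [SpV.cLab, SpV.xLab]
    · simp [SpV.mid, SpV.xLab]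


lemma ELedges_subset : ELedges L R Sg k K ⊆ Edges Eproj π σ0 k K := fun e he =>
  mem_Edges'.2 (Or.inl he)

lemma EMedges_subset : EMedges Eproj π k K ⊆ Edges Eproj π σ0 k K := fun e he =>
  mem_Edges'.2 (Or.inr (Or.inr (Or.inl he)))

lemma ERedges_subset : ERedges L R Sg k K ⊆ Edges Eproj π σ0 k K := fun e he =>
  mem_Edges'.2 (Or.inr (Or.inr (Or.inr (Or.inr (Or.inl he)))))

lemma not_fst_xDup {e : Vt L R Sg k K × Vt L R Sg k K}
    (he : e ∈ Edges Eproj π σ0 k K) (j : R) (l : Fin (numDup Sg k K)) :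
    e.1 ≠ SpV.xDup j l := by
  intro hx
  rcases mem_Edges'.1 he with h | h | h | h | h | h
  · obtain ⟨i', l', σ', rfl⟩ := mem_ELedges'.1 h
    simp [SpV.cDup, SpV.xDup] at hx
  · obtain ⟨i', σ', σ'', rfl⟩ := mem_ELStars' h
    simp [SpV.cLab, SpV.xDup] at hx
  · obtain ⟨i', j', σL', hij, hm⟩ := mem_EMedges'.1 h
    obtain ⟨n, hn, rfl⟩ := mem_pathEdges.1 hm
    rw [midVerts_length] at hn
    rcases midVerts_getElem_cases (k := k) (K := K) (i := i') (j := j') (σL := σL') (σR := π i' j' σL') n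
        (by rw [midVerts_length]; omega) with ⟨-, hv⟩ | ⟨hn1, -, -, hv⟩ | ⟨hn1, hv⟩
    · rw [hv] at hx; simp [SpV.cLab, SpV.xDup] at hx
    · rw [hv] at hx; simp [SpV.mid, SpV.xDup] at hx
    · omega
  · obtain ⟨j', σ', σ'', rfl⟩ := mem_ERStars' h
    simp [SpV.xLab, SpV.xDup] at hx
  · obtain ⟨j', l', σ', rfl⟩ := mem_ERedges'.1 h
    simp [SpV.xLab, SpV.xDup] at hx
  · obtain ⟨i', j', l', hij, rfl⟩ := mem_EOuter'.1 h
    simp [SpV.cDup, SpV.xDup] at hx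

lemma not_snd_cDup {e : Vt L R Sg k K × Vt L R Sg k K}
    (he : e ∈ Edges Eproj π σ0 k K) (i : L) (l : Fin (numDup Sg k K)) :
    e.2 ≠ SpV.cDup i l := by
  intro hx
  rcases mem_Edges'.1 he with h | h | h | h | h | h
  · obtain ⟨i', l', σ', rfl⟩ := mem_ELedges'.1 h
    simp [SpV.cDup, SpV.cLab] at hx
  · obtain ⟨i', σ', σ'', rfl⟩ := mem_ELStars' h
    simp [SpV.cLab, SpV.cDup] at hx
  · obtain ⟨i', j', σL', hij, hm⟩ := mem_EMedges'.1 h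
    obtain ⟨n, hn, rfl⟩ := mem_pathEdges.1 hm
    rw [midVerts_length] at hn
    rcases midVerts_getElem_cases (k := k) (K := K) (i := i') (j := j') (σL := σL') (σR := π i' j' σL') (n + 1)
        (by rw [midVerts_length]; omega) with ⟨hn1, -⟩ | ⟨hn1, -, -, hv⟩ | ⟨-, hv⟩
    · omega
    · rw [hv] at hx; simp [SpV.mid, SpV.cDup] at hx
    · rw [hv] at hx; simp [SpV.xLab, SpV.cDup] at hx
  · obtain ⟨j', σ', σ'', rfl⟩ := mem_ERStars' h
    simp [SpV.xLab, SpV.cDup] at hx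
  · obtain ⟨j', l', σ', rfl⟩ := mem_ERedges'.1 h
    simp [SpV.xDup, SpV.cDup] at hx
  · obtain ⟨i', j', l', hij, rfl⟩ := mem_EOuter'.1 h
    simp [SpV.xDup, SpV.cDup] at hx

lemma fst_mid_eq {e : Vt L R Sg k K × Vt L R Sg k K}
    (he : e ∈ Edges Eproj π σ0 k K) {i : L} {j : R} {σL σR : Sg} {t : Fin (2 * k - 4)}
    (h : e.1 = SpV.mid i j σL σR t) :
    e.2 = if h' : (t : ℕ) + 1 < 2 * k - 4 then SpV.mid i j σL σR ⟨(t : ℕ) + 1, h'⟩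
      else SpV.xLab j σR := by
  rcases mem_Edges'.1 he with hc | hc | hc | hc | hc | hc
  · obtain ⟨i', l', σ', rfl⟩ := mem_ELedges'.1 hc
    simp [SpV.cDup, SpV.mid] at h
  · obtain ⟨i', σ', σ'', rfl⟩ := mem_ELStars' hc
    simp [SpV.cLab, SpV.mid] at h
  · obtain ⟨i', j', σL', hij, hm⟩ := mem_EMedges'.1 hc
    obtain ⟨n, hn, rfl⟩ := mem_pathEdges.1 hm
    rw [midVerts_length] at hn
    rcases midVerts_getElem_cases (k := k) (K := K) (i := i') (j := j') (σL := σL') (σR := π i' j' σL') n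
        (by rw [midVerts_length]; omega) with ⟨-, hv⟩ | ⟨hn1, h1, h2, hv⟩ | ⟨hn1, -⟩
    · rw [hv] at h; simp [SpV.cLab, SpV.mid] at h
    · rw [hv] at h
      simp only [SpV.mid, Sum.inr.injEq, Prod.mk.injEq] at h
      obtain ⟨rfl, rfl, rfl, rfl, ht⟩ := h
      have htn : (t : ℕ) = n - 1 := by rw [← ht]
      rcases midVerts_getElem_cases (k := k) (K := K) (i := i') (j := j') (σL := σL')
        (σR := π i' j' σL') (n + 1)
        (by rw [midVerts_length]; omega) with ⟨hn2, -⟩ | ⟨hn2, -, h4, hv2⟩ | ⟨hn2, hv2⟩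
      · omega
      · rw [hv2]
        rw [dif_pos (show (t:ℕ)+1 < 2*k-4 by omega)]
        simp only [SpV.mid, Sum.inr.injEq, Prod.mk.injEq, Fin.mk.injEq]
        exact ⟨trivial, trivial, trivial, trivial, by omega⟩
      · rw [hv2]
        rw [dif_neg (show ¬((t:ℕ)+1 < 2*k-4) by omega)]
    · omega
  · obtain ⟨j', σ', σ'', rfl⟩ := mem_ERStars' hc
    simp [SpV.xLab, SpV.mid] at h
  · obtain ⟨j', l', σ', rfl⟩ := mem_ERedges'.1 hc
    simp [SpV.xLab, SpV.mid] at h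
  · obtain ⟨i', j', l', hij, rfl⟩ := mem_EOuter'.1 hc
    simp [SpV.cDup, SpV.mid] at h

lemma snd_mid_eq {e : Vt L R Sg k K × Vt L R Sg k K}
    (he : e ∈ Edges Eproj π σ0 k K) {i : L} {j : R} {σL σR : Sg} {t : Fin (2 * k - 4)}
    (h : e.2 = SpV.mid i j σL σR t) :
    e.1 = if h' : 1 ≤ (t : ℕ) then
        SpV.mid i j σL σR ⟨(t : ℕ) - 1, by have := t.isLt; omega⟩
      else SpV.cLab i σL := by
  rcases mem_Edges'.1 he with hc | hc | hc | hc | hc | hc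
  · obtain ⟨i', l', σ', rfl⟩ := mem_ELedges'.1 hc
    simp [SpV.cLab, SpV.mid] at h
  · obtain ⟨i', σ', σ'', rfl⟩ := mem_ELStars' hc
    simp [SpV.cLab, SpV.mid] at h
  · obtain ⟨i', j', σL', hij, hm⟩ := mem_EMedges'.1 hc
    obtain ⟨n, hn, rfl⟩ := mem_pathEdges.1 hm
    rw [midVerts_length] at hn
    rcases midVerts_getElem_cases (k := k) (K := K) (i := i') (j := j') (σL := σL') (σR := π i' j' σL') (n + 1)
      (by rw [midVerts_length]; omega) with ⟨hn1, -⟩ | ⟨hn1, -, h2, hv⟩ | ⟨-, hv⟩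
    · omega
    · rw [hv] at h
      simp only [SpV.mid, Sum.inr.injEq, Prod.mk.injEq] at h
      obtain ⟨rfl, rfl, rfl, rfl, ht⟩ := h
      have htn : (t : ℕ) = n := by rw [← ht]; simp
      rcases midVerts_getElem_cases (k := k) (K := K) (i := i') (j := j') (σL := σL')
        (σR := π i' j' σL') n
        (by rw [midVerts_length]; omega) with ⟨hn2, hv2⟩ | ⟨hn2, h3, h4, hv2⟩ | ⟨hn2, -⟩
      · rw [hv2]
        rw [dif_neg (show ¬(1 ≤ (t:ℕ)) by omega)]
      · rw [hv2]
        rw [dif_pos (show 1 ≤ (t:ℕ) by omega)]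
        simp only [SpV.mid, Sum.inr.injEq, Prod.mk.injEq, Fin.mk.injEq]
        exact ⟨trivial, trivial, trivial, trivial, by omega⟩
      · omega
    · rw [hv] at h; simp [SpV.xLab, SpV.mid] at h
  · obtain ⟨j', σ', σ'', rfl⟩ := mem_ERStars' hc
    simp [SpV.xLab, SpV.mid] at h
  · obtain ⟨j', l', σ', rfl⟩ := mem_ERedges'.1 hc
    simp [SpV.xDup, SpV.mid] at h
  · obtain ⟨i', j', l', hij, rfl⟩ := mem_EOuter'.1 hc
    simp [SpV.xDup, SpV.mid] at h

lemma outer_edge_eq {S : Finset (Vt L R Sg k K × Vt L R Sg k K)}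
    (hS : S ⊆ Edges Eproj π σ0 k K) {u v : Vt L R Sg k K}
    {p : List (Vt L R Sg k K × Vt L R Sg k K)}
    (hp : IsDirPath S u v p) {f : Vt L R Sg k K × Vt L R Sg k K} (hf : f ∈ p)
    (hfo : f ∈ EOuter Sg Eproj k K) : f = (u, v) := by
  obtain ⟨hne, hmem, hhead, hlast, hchain, hnd⟩ := hp
  obtain ⟨n, hn, hfeq⟩ := List.mem_iff_getElem.1 hf
  obtain ⟨i, j, l, hij, hsh⟩ := mem_EOuter'.1 hfo
  have hchain' := List.isChain_iff_getElem.1 hchain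
  have h1 : n = p.length - 1 := by
    by_contra hne2
    have hlt : n < p.length - 1 := by omega
    have hcc := hchain' n (by omega)
    refine not_fst_xDup (hS (hmem _ (List.getElem_mem (by omega : n + 1 < p.length)))) j l ?_
    rw [← hcc, hfeq, hsh]
  have h0 : n = 0 := by
    by_contra hne0
    have hcc := hchain' (n - 1) (by omega)
    have hidx : n - 1 + 1 = n := by omega
    refine not_snd_cDup (hS (hmem _ (List.getElem_mem (by omega : n - 1 < p.length)))) i l ?_
    rw [show p[n - 1].2 = p[n - 1 + 1].1 from by
      have := hcc; simp only [hidx] at this ⊢; exact this]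
    simp only [hidx, hfeq, hsh]
  subst h0
  have hu : u = f.1 := by
    rw [List.head?_eq_head hne] at hhead
    have h2 : p.head hne = p[0] := List.head_eq_getElem hne
    rw [h2, hfeq] at hhead
    simp only [Option.map_some] at hhead
    exact (Option.some_inj.1 hhead).symm
  have hv : v = f.2 := by
    rw [List.getLast?_eq_getLast hne] at hlast
    have h2 : p.getLast hne = p[p.length - 1] := List.getLast_eq_getElem hne
    have h3 : p[p.length - 1]'(by omega) = f := by
      rw [getElem_congr_idx h1.symm]
      exact hfeq
    rw [h2, h3] at hlast
    simp only [Option.map_some] at hlast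
    exact (Option.some_inj.1 hlast).symm
  rw [hu, hv]

lemma midVerts_getLast {i : L} {j : R} {σL σR : Sg} (h : midVerts k K i j σL σR ≠ []) :
    (midVerts k K i j σL σR).getLast h = SpV.xLab j σR := by
  rw [List.getLast_eq_getElem,
    getElem_congr_idx (show (midVerts k K i j σL σR).length - 1 = 2 * k - 4 + 1 by
      rw [midVerts_length]; omega)]
  exact midVerts_getElem_last


lemma mem_midVerts {i : L} {j : R} {σL σR : Sg} {v : Vt L R Sg k K} :
    v ∈ midVerts k K i j σL σR ↔
      v = SpV.cLab i σL ∨ (∃ t, v = SpV.mid i j σL σR t) ∨ v = SpV.xLab j σR := by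
  rw [midVerts]
  constructor
  · intro hv
    rcases List.mem_append.1 hv with hv | hv
    · rcases List.mem_cons.1 hv with rfl | hv
      · exact Or.inl rfl
      · obtain ⟨t, -, rfl⟩ := List.mem_map.1 hv
        exact Or.inr (Or.inl ⟨t, rfl⟩)
    · simp only [List.mem_singleton] at hv
      exact Or.inr (Or.inr hv)
  · rintro (rfl | ⟨t, rfl⟩ | rfl)
    · exact List.mem_append.2 (Or.inl (List.mem_cons_self))
    · exact List.mem_append.2 (Or.inl (List.mem_cons.2 (Or.inr
        (List.mem_map.2 ⟨t, List.mem_finRange t, rfl⟩))))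
    · exact List.mem_append.2 (Or.inr (List.mem_singleton.2 rfl))

/-- The vertex list of the canonical replacement path for an outer edge. -/
def routeVs (k K : ℕ) (i : L) (j : R) (σL σR : Sg) (l : Fin (numDup Sg k K)) :
    List (Vt L R Sg k K) :=
  SpV.cDup i l :: (midVerts k K i j σL σR ++ [SpV.xDup j l])

lemma routeVs_ne {i : L} {j : R} {σL σR : Sg} {l : Fin (numDup Sg k K)} :
    routeVs k K i j σL σR l ≠ [] := by simp [routeVs]

lemma routeVs_length {i : L} {j : R} {σL σR : Sg} {l : Fin (numDup Sg k K)} (hk : 2 ≤ k) :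
    (routeVs k K i j σL σR l).length = 2 * k := by
  simp [routeVs, midVerts]
  omega

lemma routeVs_head {i : L} {j : R} {σL σR : Sg} {l : Fin (numDup Sg k K)} (h) :
    (routeVs k K i j σL σR l).head h = SpV.cDup i l := rfl

lemma routeVs_getLast {i : L} {j : R} {σL σR : Sg} {l : Fin (numDup Sg k K)} (h) :
    (routeVs k K i j σL σR l).getLast h = SpV.xDup j l := by
  show ((SpV.cDup i l :: midVerts k K i j σL σR) ++ [SpV.xDup j l]).getLast _ = SpV.xDup j l
  exact List.getLast_concat

lemma routeVs_nodup {i : L} {j : R} {σL σR : Sg} {l : Fin (numDup Sg k K)} :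
    (routeVs k K i j σL σR l).Nodup := by
  rw [routeVs, List.nodup_cons, List.nodup_append]
  refine ⟨?_, midVerts_nodup, by simp, ?_⟩
  · intro hmem
    rcases List.mem_append.1 hmem with hmem | hmem
    · rcases mem_midVerts.1 hmem with h | ⟨t, h⟩ | h
      · simp [SpV.cDup, SpV.cLab] at h
      · simp [SpV.cDup, SpV.mid] at h
      · simp [SpV.cDup, SpV.xLab] at h
    · simp only [List.mem_singleton] at hmem
      simp [SpV.cDup, SpV.xDup] at hmem
  · intro a ha b hb hab
    simp only [List.mem_singleton] at hb
    subst hb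
    subst hab
    rcases mem_midVerts.1 ha with h | ⟨t, h⟩ | h
    · simp [SpV.xDup, SpV.cLab] at h
    · simp [SpV.xDup, SpV.mid] at h
    · simp [SpV.xDup, SpV.xLab] at h

lemma pathEdges_routeVs {i : L} {j : R} {σL σR : Sg} {l : Fin (numDup Sg k K)} :
    pathEdges (routeVs k K i j σL σR l) =
      (SpV.cDup i l, SpV.cLab i σL) ::
        (EMpath k K i j σL σR ++ [(SpV.xLab j σR, SpV.xDup j l)]) := by
  have hmvne : midVerts k K i j σL σR ≠ [] := by simp [midVerts]
  have hcne : (SpV.cDup i l :: midVerts k K i j σL σR) ≠ [] := by simp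
  have h0 : pathEdges (routeVs k K i j σL σR l) =
      pathEdges ((SpV.cDup i l :: midVerts k K i j σL σR) ++ [SpV.xDup j l]) := rfl
  rw [h0, pathEdges_concat _ hcne]
  have h1 : pathEdges (SpV.cDup i l :: midVerts k K i j σL σR) =
      (SpV.cDup i l, SpV.cLab i σL) :: pathEdges (midVerts k K i j σL σR) := rfl
  have h2 : (SpV.cDup i l :: midVerts k K i j σL σR).getLast hcne = SpV.xLab j σR := by
    rw [List.getLast_cons hmvne]
    exact midVerts_getLast _
  rw [h1, h2]
  rfl

end SpannerAux


/-- Claim `directOuter`.  In the directed spanner instance `G = (V,E)` built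
(with parameters `k ≥ 2`, `K ≥ 1`) from a projection games instance in which every left vertex
has degree exactly `K`: every `(2k−1)`-spanner `S` of `G` can be transformed into a
`(2k−1)`-spanner `S'` with `S' ∩ E_Outer = ∅` and `|S'| ≤ 3|S|`. -/
theorem directed_spanner_avoid_outer_edges
    {L R Sg : Type} [Fintype L] [Fintype R] [Fintype Sg]
    [DecidableEq L] [DecidableEq R] [DecidableEq Sg]
    (Eproj : Finset (L × R)) (π : L → R → Sg → Sg) (σ0 : Sg) (k K : ℕ)
    (hk : 2 ≤ k) (hK : 1 ≤ K)
    (hdeg : ∀ i : L, (Eproj.filter fun e => e.1 = i).card = K) :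
    ∀ S : Finset (Spanner.Vt L R Sg k K × Spanner.Vt L R Sg k K),
      IsSpanner (Spanner.Edges Eproj π σ0 k K) S (2 * k - 1) →
      ∃ S' : Finset (Spanner.Vt L R Sg k K × Spanner.Vt L R Sg k K),
        IsSpanner (Spanner.Edges Eproj π σ0 k K) S' (2 * k - 1) ∧
        S' ∩ Spanner.EOuter Sg Eproj k K = ∅ ∧ S'.card ≤ 3 * S.card := by
  classical
  intro S hSsp
  obtain ⟨hSsub, hSpan⟩ := hSsp
  set O : Finset (Spanner.Vt L R Sg k K × Spanner.Vt L R Sg k K) :=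
    Spanner.EOuter Sg Eproj k K with hO
  set ELadd : Finset (Spanner.Vt L R Sg k K × Spanner.Vt L R Sg k K) :=
    (S ∩ O).image (fun e : Spanner.Vt L R Sg k K × Spanner.Vt L R Sg k K =>
      match e.1 with
      | Sum.inr (Sum.inl (i, l)) => (SpV.cDup i l, SpV.cLab i σ0)
      | _ => e) with hELadd
  set ERadd : Finset (Spanner.Vt L R Sg k K × Spanner.Vt L R Sg k K) :=
    (S ∩ O).image (fun e : Spanner.Vt L R Sg k K × Spanner.Vt L R Sg k K =>
      match e.1, e.2 with
      | Sum.inr (Sum.inl (i, _)), Sum.inr (Sum.inr (Sum.inr (Sum.inl (j, l)))) =>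
          (SpV.xLab j (π i j σ0), SpV.xDup j l)
      | _, _ => e) with hERadd
  set Madd : Finset (Spanner.Vt L R Sg k K × Spanner.Vt L R Sg k K) :=
    Eproj.biUnion (fun q => (Spanner.EMpath k K q.1 q.2 σ0 (π q.1 q.2 σ0)).toFinset)
    with hMadd
  refine ⟨((S \ O) ∪ ELadd ∪ ERadd) ∪ Madd, ⟨?_, ?_⟩, ?_, ?_⟩
  · -- S' ⊆ Edges
    intro f hf
    simp only [Finset.mem_union] at hf
    rcases hf with ((hf | hf) | hf) | hf
    · exact hSsub (Finset.mem_sdiff.1 hf).1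
    · rw [hELadd] at hf
      obtain ⟨e, he, hfe⟩ := Finset.mem_image.1 hf
      obtain ⟨-, heO⟩ := Finset.mem_inter.1 he
      obtain ⟨i, j, l, hij, rfl⟩ := mem_EOuter'.1 heO
      rw [← hfe]
      exact ELedges_subset (mem_ELedges'.2 ⟨i, l, σ0, rfl⟩)
    · rw [hERadd] at hf
      obtain ⟨e, he, hfe⟩ := Finset.mem_image.1 hf
      obtain ⟨-, heO⟩ := Finset.mem_inter.1 he
      obtain ⟨i, j, l, hij, rfl⟩ := mem_EOuter'.1 heO
      rw [← hfe]
      exact ERedges_subset (mem_ERedges'.2 ⟨j, l, π i j σ0, rfl⟩)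
    · rw [hMadd] at hf
      obtain ⟨q, hq, hf⟩ := Finset.mem_biUnion.1 hf
      exact EMedges_subset (mem_EMedges'.2 ⟨q.1, q.2, σ0, by simpa using hq,
        List.mem_toFinset.1 hf⟩)
  · -- spanner property
    intro e he
    by_cases heSO : e ∈ S ∩ O
    · -- outer edge of S: use the canonical replacement route
      obtain ⟨-, heO⟩ := Finset.mem_inter.1 (by exact heSO)
      obtain ⟨i, j, l, hij, hsh⟩ := mem_EOuter'.1 heO
      subst hsh
      refine ⟨Spanner.pathEdges (routeVs k K i j σ0 (π i j σ0) l), ?_, ?_⟩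
      · have hIDP := isDirPath_pathEdges (((S \ O) ∪ ELadd ∪ ERadd) ∪ Madd)
          (routeVs k K i j σ0 (π i j σ0) l) routeVs_ne
          (by rw [routeVs_length hk]; omega) routeVs_nodup ?_
        · rw [routeVs_head, routeVs_getLast] at hIDP
          exact hIDP
        · intro f hf
          rw [pathEdges_routeVs] at hf
          simp only [Finset.mem_union]
          rcases List.mem_cons.1 hf with rfl | hf
          · refine Or.inl (Or.inl (Or.inr ?_))
            rw [hELadd]
            exact Finset.mem_image.2 ⟨_, heSO, rfl⟩
          rcases List.mem_append.1 hf with hf | hf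
          · refine Or.inr ?_
            rw [hMadd]
            exact Finset.mem_biUnion.2 ⟨(i, j), hij, List.mem_toFinset.2 hf⟩
          · simp only [List.mem_singleton] at hf
            subst hf
            refine Or.inl (Or.inr ?_)
            rw [hERadd]
            exact Finset.mem_image.2 ⟨_, heSO, rfl⟩
      · rw [length_pathEdges, routeVs_length hk]
    · -- non-outer or non-S edge: the original path avoids all outer edges
      obtain ⟨p, hp, hlen⟩ := hSpan e he
      have hnoO : ∀ f ∈ p, f ∉ O := by
        intro f hf hfO
        have hfe : f = (e.1, e.2) := outer_edge_eq hSsub hp hf hfO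
        have hfe' : f = e := by rw [hfe]
        have hfS : f ∈ S := hp.2.1 f hf
        exact heSO (Finset.mem_inter.2 ⟨hfe' ▸ hfS, hfe' ▸ hfO⟩)
      obtain ⟨hne', hmem', h3, h4, h5, h6⟩ := hp
      refine ⟨p, ⟨hne', fun f hf => ?_, h3, h4, h5, h6⟩, hlen⟩
      simp only [Finset.mem_union]
      exact Or.inl (Or.inl (Or.inl (Finset.mem_sdiff.2 ⟨hmem' f hf, hnoO f hf⟩)))
  · -- no outer edges in S'
    rw [Finset.eq_empty_iff_forall_notMem]
    intro f hf
    obtain ⟨hfS', hfO⟩ := Finset.mem_inter.1 hf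
    obtain ⟨i, j, l, hij, hsh⟩ := mem_EOuter'.1 hfO
    simp only [Finset.mem_union] at hfS'
    rcases hfS' with ((hf' | hf') | hf') | hf'
    · exact (Finset.mem_sdiff.1 hf').2 hfO
    · rw [hELadd] at hf'
      obtain ⟨e', he', hfe⟩ := Finset.mem_image.1 hf'
      obtain ⟨-, heO'⟩ := Finset.mem_inter.1 he'
      obtain ⟨i', j', l', hij', rfl⟩ := mem_EOuter'.1 heO'
      rw [hsh] at hfe
      simp [SpV.cDup, SpV.cLab, SpV.xDup, Prod.ext_iff] at hfe
    · rw [hERadd] at hf'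
      obtain ⟨e', he', hfe⟩ := Finset.mem_image.1 hf'
      obtain ⟨-, heO'⟩ := Finset.mem_inter.1 he'
      obtain ⟨i', j', l', hij', rfl⟩ := mem_EOuter'.1 heO'
      rw [hsh] at hfe
      simp [SpV.cDup, SpV.xLab, SpV.xDup, Prod.ext_iff] at hfe
    · rw [hMadd] at hf'
      obtain ⟨q, hq, hf'⟩ := Finset.mem_biUnion.1 hf'
      have hf'' := List.mem_toFinset.1 hf'
      obtain ⟨n, hn, hfeq⟩ := mem_pathEdges.1 hf''
      rw [midVerts_length] at hn
      rcases midVerts_getElem_cases (k := k) (K := K) (i := q.1) (j := q.2) (σL := σ0)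
          (σR := π q.1 q.2 σ0) n (by rw [midVerts_length]; omega)
        with ⟨-, hv⟩ | ⟨hn1, -, -, hv⟩ | ⟨hn1, -⟩
      · have h1 := congrArg Prod.fst (hsh.symm.trans hfeq)
        simp only [] at h1
        rw [hv] at h1
        simp [SpV.cDup, SpV.cLab] at h1
      · have h1 := congrArg Prod.fst (hsh.symm.trans hfeq)
        simp only [] at h1
        rw [hv] at h1
        simp [SpV.cDup, SpV.mid] at h1
      · omega
  · -- cardinality bound
    have hc1 : (((S \ O) ∪ ELadd ∪ ERadd) ∪ Madd).card ≤
        (S \ O).card + ELadd.card + ERadd.card + Madd.card := by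
      calc (((S \ O) ∪ ELadd ∪ ERadd) ∪ Madd).card
          ≤ ((S \ O) ∪ ELadd ∪ ERadd).card + Madd.card := Finset.card_union_le _ _
        _ ≤ ((S \ O) ∪ ELadd).card + ERadd.card + Madd.card := by
            have := Finset.card_union_le ((S \ O) ∪ ELadd) ERadd; omega
        _ ≤ (S \ O).card + ELadd.card + ERadd.card + Madd.card := by
            have := Finset.card_union_le (S \ O) ELadd; omega
    have hc2 : ELadd.card ≤ (S ∩ O).card := by rw [hELadd]; exact Finset.card_image_le
    have hc3 : ERadd.card ≤ (S ∩ O).card := by rw [hERadd]; exact Finset.card_image_le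
    have hc4 : (S ∩ O).card + (S \ O).card = S.card := Finset.card_inter_add_card_sdiff S O
    have hc5 : (S ∩ O).card ≤ S.card := Finset.card_le_card (Finset.inter_subset_left)
    have hMaddS : Madd.card ≤ S.card := by
      by_cases hk3 : 3 ≤ k
      · -- all middle-path edges are forced into any spanner
        refine Finset.card_le_card ?_
        intro f hf
        rw [hMadd] at hf
        obtain ⟨q, hq, hf⟩ := Finset.mem_biUnion.1 hf
        obtain ⟨i, j⟩ := q
        have hf' := List.mem_toFinset.1 hf
        have hfE : f ∈ Spanner.Edges Eproj π σ0 k K :=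
          EMedges_subset (mem_EMedges'.2 ⟨i, j, σ0, hq, hf'⟩)
        obtain ⟨n, hn, rfl⟩ := mem_pathEdges.1 hf'
        rw [midVerts_length] at hn
        obtain ⟨p, hp, -⟩ := hSpan _ hfE
        rcases Nat.eq_zero_or_pos n with rfl | hpos
        · -- first edge of the middle path: forced via its head vertex
          obtain ⟨g, -, hgS, hg2⟩ := IsDirPath.last_edge hp
          have hg2' : g.2 = SpV.mid i j σ0 (π i j σ0) ⟨0, by omega⟩ := by
            rw [hg2]
            exact midVerts_getElem_succ 0 (by omega)
          have hgeq := snd_mid_eq (hSsub hgS) hg2'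
          rw [dif_neg (by simp)] at hgeq
          have hgf : g = ((Spanner.midVerts k K i j σ0 (π i j σ0))[0]'(by
                rw [midVerts_length]; omega),
              (Spanner.midVerts k K i j σ0 (π i j σ0))[1]'(by
                rw [midVerts_length]; omega)) := by
            have e0 : (Spanner.midVerts k K i j σ0 (π i j σ0))[0]'(by
                rw [midVerts_length]; omega) = SpV.cLab i σ0 := midVerts_getElem_zero
            have e1 : (Spanner.midVerts k K i j σ0 (π i j σ0))[1]'(by
                rw [midVerts_length]; omega) = SpV.mid i j σ0 (π i j σ0) ⟨0, by omega⟩ :=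
              midVerts_getElem_succ 0 (by omega)
            rw [e0, e1, ← hgeq, ← hg2']
          rw [← hgf]
          exact hgS
        · -- later edges: forced via their tail vertex
          obtain ⟨g, -, hgS, hg1⟩ := IsDirPath.first_edge hp
          have hg1' : g.1 = SpV.mid i j σ0 (π i j σ0) ⟨n - 1, by omega⟩ := by
            rw [hg1]
            show (Spanner.midVerts k K i j σ0 (π i j σ0))[n]'(by
              rw [midVerts_length]; omega) = _
            obtain ⟨m, rfl⟩ : ∃ m, n = m + 1 := ⟨n - 1, by omega⟩
            have := midVerts_getElem_succ (k := k) (K := K) (i := i) (j := j) (σL := σ0)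
              (σR := π i j σ0) m (by omega) (h := by rw [midVerts_length]; omega)
            rw [this]
            congr 1
          have hgeq := fst_mid_eq (hSsub hgS) hg1'
          have hgf : g = ((Spanner.midVerts k K i j σ0 (π i j σ0))[n]'(by
                rw [midVerts_length]; omega),
              (Spanner.midVerts k K i j σ0 (π i j σ0))[n + 1]'(by
                rw [midVerts_length]; omega)) := by
            refine Prod.ext ?_ ?_
            · rw [hg1]
            · rw [hgeq]
              by_cases hlt : n < 2 * k - 4
              · rw [dif_pos (by simp only []; omega)]
                have := midVerts_getElem_succ (k := k) (K := K) (i := i) (j := j) (σL := σ0)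
                  (σR := π i j σ0) n hlt (h := by rw [midVerts_length]; omega)
                rw [this]
                simp only [SpV.mid, Sum.inr.injEq, Prod.mk.injEq, Fin.mk.injEq]
                exact ⟨trivial, trivial, trivial, trivial, by omega⟩
              · rw [dif_neg (by simp only []; omega)]
                have hn' : n = 2 * k - 4 := by omega
                have := midVerts_getElem_last (k := k) (K := K) (i := i) (j := j) (σL := σ0)
                  (σR := π i j σ0) (h := by rw [midVerts_length]; omega)
                rw [show (Spanner.midVerts k K i j σ0 (π i j σ0))[n + 1]'(by
                    rw [midVerts_length]; omega) = (Spanner.midVerts k K i j σ0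
                      (π i j σ0))[2 * k - 4 + 1]'(by rw [midVerts_length]; omega) from by
                  rw [getElem_congr_idx (by omega : n + 1 = 2 * k - 4 + 1)]]
                rw [this]
            
          rw [← hgf]
          exact hgS
      · -- k = 2 : few middle edges, and S contains at least |L|·D edges
        have hk2 : k = 2 := by omega
        have hMc : Madd.card ≤ Eproj.card := by
          rw [hMadd]
          calc (Eproj.biUnion fun q =>
                (Spanner.EMpath k K q.1 q.2 σ0 (π q.1 q.2 σ0)).toFinset).card
              ≤ ∑ q ∈ Eproj, (Spanner.EMpath k K q.1 q.2 σ0 (π q.1 q.2 σ0)).toFinset.card :=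
              Finset.card_biUnion_le
            _ ≤ ∑ _q ∈ Eproj, 1 := by
              refine Finset.sum_le_sum fun q hq => ?_
              calc (Spanner.EMpath k K q.1 q.2 σ0 (π q.1 q.2 σ0)).toFinset.card
                  ≤ (Spanner.EMpath k K q.1 q.2 σ0 (π q.1 q.2 σ0)).length :=
                  List.toFinset_card_le _
                _ ≤ 1 := by
                  show (Spanner.pathEdges _).length ≤ 1
                  rw [length_pathEdges, midVerts_length]
                  omega
            _ = Eproj.card := by simp
        have hEc : Eproj.card = Fintype.card L * K := by
          rw [Finset.card_eq_sum_card_fiberwise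
            (f := Prod.fst) (t := Finset.univ) (fun x _ => Finset.mem_univ _)]
          simp [hdeg, Finset.sum_const, Finset.card_univ]
        have hpick : ∀ q : L × Fin (Spanner.numDup Sg k K),
            ∃ f : Spanner.Vt L R Sg k K × Spanner.Vt L R Sg k K,
              f ∈ S ∧ f.1 = SpV.cDup q.1 q.2 := by
          intro q
          have hE : ((SpV.cDup q.1 q.2 : Spanner.Vt L R Sg k K), (SpV.cLab q.1 σ0 :
              Spanner.Vt L R Sg k K)) ∈ Spanner.Edges Eproj π σ0 k K :=
            ELedges_subset (mem_ELedges'.2 ⟨q.1, q.2, σ0, rfl⟩)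
          obtain ⟨p, hp, -⟩ := hSpan _ hE
          obtain ⟨g, -, hgS, hg1⟩ := IsDirPath.first_edge hp
          exact ⟨g, hgS, hg1⟩
        choose g hg1 hg2 using hpick
        have hginj : Function.Injective g := by
          intro a b hab
          have h1 := hg2 a
          rw [hab, hg2 b] at h1
          have h2 : b = a := by simpa [SpV.cDup, Prod.ext_iff] using h1
          exact h2.symm
        have hcardg : Fintype.card L * (k * K * Fintype.card Sg) ≤ S.card := by
          have himg : Finset.univ.image g ⊆ S := by
            intro f hf
            obtain ⟨q, -, rfl⟩ := Finset.mem_image.1 hf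
            exact hg1 q
          have h3 : (Finset.univ.image g).card =
              Fintype.card (L × Fin (Spanner.numDup Sg k K)) := by
            rw [Finset.card_image_of_injective _ hginj, Finset.card_univ]
          have h4 := Finset.card_le_card himg
          rw [h3] at h4
          simpa [Spanner.numDup, mul_assoc] using h4
        have hSgpos : 1 ≤ Fintype.card Sg := Fintype.card_pos_iff.2 ⟨σ0⟩
        have hKle : K ≤ k * K * Fintype.card Sg :=
          le_trans (Nat.le_mul_of_pos_left K (by omega))
            (Nat.le_mul_of_pos_right _ (by omega))
        calc Madd.card ≤ Fintype.card L * K := by omega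
          _ ≤ Fintype.card L * (k * K * Fintype.card Sg) := Nat.mul_le_mul_left _ hKle
          _ ≤ S.card := hcardg
    omega
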